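/- arXiv:2310.08566 — 2 statements merged into one kernel-verified Lean document; each statement's English description precedes it below -/
import Mathlib

section
/- For any m ≥ 1 and κ ≥ 1, if m ≥ (κ^{1/4}/4 + 1)·max{⌈log(2√Λ/ε)⌉, ⌈log(2√λ/ε + 1)⌉} then 2·max{√Λ·(1 + 2/κ^{1/4})^{-(2m+1)}, √λ·((1 + 2/κ^{1/4})^{2m+1} - 1)^{-1}} ≤ ε, for any 0 < ε < 1 and 0 < λ ≤ Λ with κ = Λ/λ. -/
set_option maxHeartbeats 800000


/-- Sufficient number of Padé terms for an `ε`-accurate matrix square root: if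
`m ≥ (κ^{1/4}/4 + 1) · max{⌈log(2√Λ/ε)⌉, ⌈log(2√λ/ε + 1)⌉}` with `κ = Λ/λ`, then the
Padé error bound is at most `ε`. -/
theorem pade_terms_sufficient (m : ℕ) (hm : 1 ≤ m) (ε lam Lam : ℝ)
    (hε : 0 < ε) (hε1 : ε < 1) (hlam : 0 < lam) (hlamLam : lam ≤ Lam)
    (hmlarge : ((Lam / lam) ^ ((1 : ℝ) / 4) / 4 + 1) *
        max (⌈Real.log (2 * Real.sqrt Lam / ε)⌉ : ℝ)
          (⌈Real.log (2 * Real.sqrt lam / ε + 1)⌉ : ℝ) ≤ (m : ℝ)) :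
    2 * max (Real.sqrt Lam * ((1 + 2 / (Lam / lam) ^ ((1 : ℝ) / 4)) ^ (2 * m + 1))⁻¹)
        (Real.sqrt lam * ((1 + 2 / (Lam / lam) ^ ((1 : ℝ) / 4)) ^ (2 * m + 1) - 1)⁻¹) ≤ ε := by
  have hLam : 0 < Lam := lt_of_lt_of_le hlam hlamLam
  set t : ℝ := (Lam / lam) ^ ((1 : ℝ) / 4) with htdef
  have hκ : 1 ≤ Lam / lam := (one_le_div hlam).mpr hlamLam
  have ht : 1 ≤ t := by
    rw [htdef]
    calc (1 : ℝ) = 1 ^ ((1 : ℝ) / 4) := (Real.one_rpow _).symm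
      _ ≤ (Lam / lam) ^ ((1 : ℝ) / 4) := Real.rpow_le_rpow (by norm_num) hκ (by norm_num)
  have ht0 : 0 < t := lt_of_lt_of_le one_pos ht
  set b : ℝ := 1 + 2 / t with hbdef
  set M : ℝ := max (⌈Real.log (2 * Real.sqrt Lam / ε)⌉ : ℝ)
      (⌈Real.log (2 * Real.sqrt lam / ε + 1)⌉ : ℝ) with hMdef
  have hsL : 0 < Real.sqrt Lam := Real.sqrt_pos.mpr hLam
  have hsl : 0 < Real.sqrt lam := Real.sqrt_pos.mpr hlam
  have hxL : 0 < 2 * Real.sqrt Lam / ε := by positivity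
  have hxl : 0 < 2 * Real.sqrt lam / ε + 1 := by positivity
  have hM0 : 0 ≤ M := by
    have h1 : Real.log (2 * Real.sqrt lam / ε + 1) ≤
        (⌈Real.log (2 * Real.sqrt lam / ε + 1)⌉ : ℝ) := Int.le_ceil _
    have h2 : 0 < Real.log (2 * Real.sqrt lam / ε + 1) := Real.log_pos (by
      have : (0:ℝ) < 2 * Real.sqrt lam / ε := by positivity
      linarith)
    exact le_trans (le_of_lt h2) (le_trans h1 (le_max_right _ _))
  -- exp y ≤ b where y = 1/(t/2+1)
  set y : ℝ := 1 / (t / 2 + 1) with hydef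
  have hy0 : 0 < y := by positivity
  have hy1 : y * (t / 2 + 1) = 1 := by rw [hydef]; field_simp
  have hylt : y < 1 := by
    rw [hydef, div_lt_one (by positivity)]; linarith
  have hexp : Real.exp y ≤ b := by
    have h1 : 1 - y ≤ Real.exp (-y) := by
      have := Real.add_one_le_exp (-y); linarith
    have h2 : 0 < 1 - y := by linarith
    have h3 : (Real.exp (-y))⁻¹ ≤ (1 - y)⁻¹ := inv_anti₀ h2 h1
    have h4 : (1 - y)⁻¹ = b := by
      rw [hydef, hbdef]; field_simp; rw [add_sub_cancel_right, div_self ht0.ne']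
    rw [Real.exp_neg, inv_inv, h4] at h3
    exact h3
  -- M ≤ (2m+1) y
  have h3 : M * (t / 2 + 1) ≤ 2 * (m : ℝ) + 1 := by nlinarith [hmlarge, hM0]
  have h4 : M * (y * (t / 2 + 1)) = M := by rw [hy1]; ring
  have hMy : M ≤ (2 * (m : ℝ) + 1) * y := by
    have := mul_le_mul_of_nonneg_right h3 hy0.le
    nlinarith [this, h4]
  -- b^(2m+1) ≥ exp M
  have hb0 : 0 < b := by rw [hbdef]; positivity
  have hBexp : Real.exp M ≤ b ^ (2 * m + 1) := by
    calc Real.exp M ≤ Real.exp ((2 * (m : ℝ) + 1) * y) := Real.exp_le_exp.mpr hMy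
      _ = Real.exp (((2 * m + 1 : ℕ) : ℝ) * y) := by push_cast; ring_nf
      _ = Real.exp y ^ (2 * m + 1) := Real.exp_nat_mul y (2 * m + 1)
      _ ≤ b ^ (2 * m + 1) := pow_le_pow_left₀ (Real.exp_pos y).le hexp _
  have hB1 : 2 * Real.sqrt Lam / ε ≤ b ^ (2 * m + 1) := by
    refine le_trans ?_ hBexp
    calc 2 * Real.sqrt Lam / ε = Real.exp (Real.log (2 * Real.sqrt Lam / ε)) :=
          (Real.exp_log hxL).symm
      _ ≤ Real.exp M := Real.exp_le_exp.mpr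
          (le_trans (Int.le_ceil _) (le_max_left _ _))
  have hB2 : 2 * Real.sqrt lam / ε + 1 ≤ b ^ (2 * m + 1) := by
    refine le_trans ?_ hBexp
    calc 2 * Real.sqrt lam / ε + 1 = Real.exp (Real.log (2 * Real.sqrt lam / ε + 1)) :=
          (Real.exp_log hxl).symm
      _ ≤ Real.exp M := Real.exp_le_exp.mpr
          (le_trans (Int.le_ceil _) (le_max_right _ _))
  set B : ℝ := b ^ (2 * m + 1) with hBdef
  have hB0 : 0 < B := pow_pos hb0 _
  have hBm1 : 0 < B - 1 := by
    have : (0:ℝ) < 2 * Real.sqrt lam / ε := by positivity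
    linarith
  have ha : Real.sqrt Lam * B⁻¹ ≤ ε / 2 := by
    rw [← div_eq_mul_inv, div_le_div_iff₀ hB0 (by norm_num : (0:ℝ) < 2)]
    have := (div_le_iff₀ hε).mp hB1
    nlinarith
  have hc : Real.sqrt lam * (B - 1)⁻¹ ≤ ε / 2 := by
    rw [← div_eq_mul_inv, div_le_div_iff₀ hBm1 (by norm_num : (0:ℝ) < 2)]
    have := (div_le_iff₀ hε).mp (by linarith : 2 * Real.sqrt lam / ε ≤ B - 1)
    nlinarith
  have hfin : max (Real.sqrt Lam * B⁻¹) (Real.sqrt lam * (B - 1)⁻¹) ≤ ε / 2 :=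
    max_le ha hc
  linarith
end

section
/- Let z ∼ N(0, I_d) be standard Gaussian in R^d, let x_k, x_j, x_j' ∈ R^d with ||x_k - x_j'||_2 ≥ η > 0, and let y ∈ R. Then P(⟨x_j - x_j', z⟩ ≥ ⟨x_k - x_j', z⟩ + y ≥ 0) + P(⟨x_j - x_j', z⟩ ≤ ⟨x_k - x_j', z⟩ + y ≤ 0) ≤ 2||x_j - x_j'||_2·√(2log(2/δ))/(√(2π)·η) + δ for any δ ∈ (0,1). -/
open MeasureTheory ProbabilityTheory Real
open scoped NNReal ENNReal

/-- The Euclidean norm of a vector in `Fin d → ℝ`. -/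
noncomputable def l2norm {d : ℕ} (v : Fin d → ℝ) : ℝ := Real.sqrt (∑ i, v i ^ 2)

lemma exp_mul_gaussianPDFReal (v : ℝ≥0) (hv : v ≠ 0) (c x : ℝ) :
    Real.exp (c * x) * gaussianPDFReal 0 v x
      = Real.exp (c^2 * v / 2) * gaussianPDFReal (c * v) v x := by
  have hv' : (0:ℝ) < v := lt_of_le_of_ne v.coe_nonneg (by exact_mod_cast (Ne.symm hv))
  have key : Real.exp (c*x) * Real.exp (-(x-0)^2/(2*(v:ℝ)))
      = Real.exp (c^2*(v:ℝ)/2) * Real.exp (-(x - c*(v:ℝ))^2/(2*(v:ℝ))) := by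
    rw [← Real.exp_add, ← Real.exp_add]
    congr 1
    field_simp
    ring
  unfold gaussianPDFReal
  calc Real.exp (c*x) * ((Real.sqrt (2*π*(v:ℝ)))⁻¹ * Real.exp (-(x-0)^2/(2*(v:ℝ))))
      = (Real.sqrt (2*π*(v:ℝ)))⁻¹ * (Real.exp (c*x) * Real.exp (-(x-0)^2/(2*(v:ℝ)))) := by ring
    _ = (Real.sqrt (2*π*(v:ℝ)))⁻¹ * (Real.exp (c^2*(v:ℝ)/2) * Real.exp (-(x - c*(v:ℝ))^2/(2*(v:ℝ)))) := by rw [key]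
    _ = _ := by ring


lemma gaussianPDFReal_convolution_identity (v1 v2 : ℝ≥0) (h1 : v1 ≠ 0) (h2 : v2 ≠ 0) (s x : ℝ) :
    gaussianPDFReal 0 v1 x * gaussianPDFReal 0 v2 (s - x)
      = gaussianPDFReal 0 (v1 + v2) s
        * gaussianPDFReal ((v1:ℝ) * s / ((v1:ℝ) + v2)) (v1 * v2 / (v1 + v2)) x := by
  have h1' : (0:ℝ) < v1 := lt_of_le_of_ne v1.coe_nonneg (by exact_mod_cast (Ne.symm h1))
  have h2' : (0:ℝ) < v2 := lt_of_le_of_ne v2.coe_nonneg (by exact_mod_cast (Ne.symm h2))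
  have hs : (0:ℝ) < (v1:ℝ) + v2 := by linarith
  unfold gaussianPDFReal
  push_cast
  have hsq : Real.sqrt (2*π*(v1:ℝ)) * Real.sqrt (2*π*(v2:ℝ))
      = Real.sqrt (2*π*((v1:ℝ)+(v2:ℝ))) * Real.sqrt (2*π*((v1:ℝ)*(v2:ℝ)/((v1:ℝ)+(v2:ℝ)))) := by
    rw [← Real.sqrt_mul (by positivity), ← Real.sqrt_mul (by positivity)]
    congr 1
    field_simp
  have hexp : Real.exp (-(x-0)^2/(2*(v1:ℝ))) * Real.exp (-(s-x-0)^2/(2*(v2:ℝ)))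
      = Real.exp (-(s-0)^2/(2*((v1:ℝ)+(v2:ℝ))))
        * Real.exp (-(x - (v1:ℝ)*s/((v1:ℝ)+(v2:ℝ)))^2/(2*((v1:ℝ)*(v2:ℝ)/((v1:ℝ)+(v2:ℝ))))) := by
    rw [← Real.exp_add, ← Real.exp_add]
    congr 1
    field_simp
    ring
  calc (Real.sqrt (2*π*(v1:ℝ)))⁻¹ * Real.exp (-(x-0)^2/(2*(v1:ℝ)))
        * ((Real.sqrt (2*π*(v2:ℝ)))⁻¹ * Real.exp (-(s-x-0)^2/(2*(v2:ℝ))))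
      = (Real.sqrt (2*π*(v1:ℝ)) * Real.sqrt (2*π*(v2:ℝ)))⁻¹
        * (Real.exp (-(x-0)^2/(2*(v1:ℝ))) * Real.exp (-(s-x-0)^2/(2*(v2:ℝ)))) := by
        rw [mul_inv]; ring
    _ = (Real.sqrt (2*π*((v1:ℝ)+(v2:ℝ))) * Real.sqrt (2*π*((v1:ℝ)*(v2:ℝ)/((v1:ℝ)+(v2:ℝ)))))⁻¹
        * (Real.exp (-(s-0)^2/(2*((v1:ℝ)+(v2:ℝ))))
          * Real.exp (-(x - (v1:ℝ)*s/((v1:ℝ)+(v2:ℝ)))^2/(2*((v1:ℝ)*(v2:ℝ)/((v1:ℝ)+(v2:ℝ)))))) := by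
        rw [hsq, hexp]
    _ = _ := by rw [mul_inv]; ring


lemma gaussian_conv (v1 v2 : ℝ≥0) :
    ((gaussianReal 0 v1).prod (gaussianReal 0 v2)).map (fun p : ℝ × ℝ => p.1 + p.2)
      = gaussianReal 0 (v1 + v2) := by
  by_cases h1 : v1 = 0
  · subst h1
    rw [zero_add, gaussianReal_zero_var, Measure.dirac_prod,
      Measure.map_map measurable_add (measurable_prodMk_left)]
    simp [Function.comp_def]
  by_cases h2 : v2 = 0
  · subst h2
    rw [add_zero, gaussianReal_zero_var, Measure.prod_dirac,
      Measure.map_map measurable_add (measurable_prodMk_right)]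
    simp [Function.comp_def]
  have h1' : (0:ℝ) < v1 := lt_of_le_of_ne v1.coe_nonneg (by exact_mod_cast (Ne.symm h1))
  have h2' : (0:ℝ) < v2 := lt_of_le_of_ne v2.coe_nonneg (by exact_mod_cast (Ne.symm h2))
  have hw : v1 * v2 / (v1 + v2) ≠ 0 := by
    rw [ne_eq, div_eq_zero_iff]
    push_neg
    constructor
    · exact mul_ne_zero h1 h2
    · rw [ne_eq, add_eq_zero]
      exact fun hh => h1 hh.1
  have h12 : v1 + v2 ≠ 0 := by
    rw [ne_eq, add_eq_zero]
    exact fun hh => h1 hh.1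
  ext s hs
  rw [Measure.map_apply measurable_add hs, Measure.prod_apply (measurable_add hs)]
  have step1 : ∀ x : ℝ, gaussianReal 0 v2 (Prod.mk x ⁻¹' ((fun p : ℝ × ℝ => p.1 + p.2) ⁻¹' s))
      = ∫⁻ t, s.indicator (fun t => gaussianPDF 0 v2 (t - x)) t := by
    intro x
    have hset : (Prod.mk x ⁻¹' ((fun p : ℝ × ℝ => p.1 + p.2) ⁻¹' s)) = (fun y => x + y) ⁻¹' s := rfl
    rw [hset, gaussianReal_apply _ h2,
      ← lintegral_indicator ((measurable_const_add x) hs) (gaussianPDF 0 v2)]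
    have heq : ∀ y, ((fun y => x + y) ⁻¹' s).indicator (gaussianPDF 0 v2) y
        = s.indicator (fun t => gaussianPDF 0 v2 (t - x)) (x + y) := by
      intro y
      by_cases hy : x + y ∈ s
      · rw [Set.indicator_of_mem hy, Set.indicator_of_mem (by exact hy)]
        simp
      · rw [Set.indicator_of_notMem hy, Set.indicator_of_notMem (by exact hy)]
    simp_rw [heq]
    exact lintegral_add_left_eq_self (s.indicator fun t => gaussianPDF 0 v2 (t - x)) x
  simp_rw [step1]
  have hF : Measurable (Function.uncurry fun (x t : ℝ) =>
      s.indicator (fun u => gaussianPDF 0 v2 (u - x)) t) := by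
    have : (Function.uncurry fun (x t : ℝ) => s.indicator (fun u => gaussianPDF 0 v2 (u - x)) t)
        = fun p : ℝ × ℝ => s.indicator (fun _ => (1:ℝ≥0∞)) p.2 * gaussianPDF 0 v2 (p.2 - p.1) := by
      funext p
      by_cases hp : p.2 ∈ s <;>
        simp [Function.uncurry, Set.indicator_of_mem, Set.indicator_of_notMem, hp]
    rw [this]
    exact ((measurable_const.indicator hs).comp measurable_snd).mul
      ((measurable_gaussianPDF 0 v2).comp (measurable_snd.sub measurable_fst))
  have hg : Measurable (fun x : ℝ => ∫⁻ t, s.indicator (fun u => gaussianPDF 0 v2 (u - x)) t) :=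
    hF.lintegral_prod_right'
  rw [gaussianReal_of_var_ne_zero _ h1,
    lintegral_withDensity_eq_lintegral_mul _ (measurable_gaussianPDF 0 v1) hg]
  simp only [Pi.mul_apply]
  have hmul : ∀ x : ℝ, gaussianPDF 0 v1 x * ∫⁻ t, s.indicator (fun u => gaussianPDF 0 v2 (u - x)) t
      = ∫⁻ t, gaussianPDF 0 v1 x * s.indicator (fun u => gaussianPDF 0 v2 (u - x)) t := fun x =>
    (lintegral_const_mul _ hF.of_uncurry_left).symm
  simp_rw [hmul]
  rw [lintegral_lintegral_swap]
  swap
  · exact ((measurable_gaussianPDF 0 v1).comp measurable_fst).mul hF |>.aemeasurable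
  have inner : ∀ t : ℝ, (∫⁻ x, gaussianPDF 0 v1 x * s.indicator (fun u => gaussianPDF 0 v2 (u - x)) t)
      = s.indicator (fun _ => (1:ℝ≥0∞)) t * gaussianPDF 0 (v1+v2) t := by
    intro t
    by_cases ht : t ∈ s
    · simp only [Set.indicator_of_mem ht, one_mul]
      have : ∀ x, gaussianPDF 0 v1 x * gaussianPDF 0 v2 (t - x)
          = ENNReal.ofReal (gaussianPDFReal 0 v1 x * gaussianPDFReal 0 v2 (t - x)) := by
        intro x
        rw [ENNReal.ofReal_mul (gaussianPDFReal_nonneg 0 v1 x)]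
        rfl
      simp_rw [this]
      rw [← ofReal_integral_eq_lintegral_ofReal]
      · rw [show (fun x => gaussianPDFReal 0 v1 x * gaussianPDFReal 0 v2 (t - x))
            = fun x => gaussianPDFReal 0 (v1 + v2) t
              * gaussianPDFReal ((v1:ℝ) * t / ((v1:ℝ) + v2)) (v1 * v2 / (v1 + v2)) x from
            funext fun x => gaussianPDFReal_convolution_identity v1 v2 h1 h2 t x]
        rw [integral_const_mul, integral_gaussianPDFReal_eq_one _ hw, mul_one]
        rfl
      · rw [show (fun x => gaussianPDFReal 0 v1 x * gaussianPDFReal 0 v2 (t - x))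
            = fun x => gaussianPDFReal 0 (v1 + v2) t
              * gaussianPDFReal ((v1:ℝ) * t / ((v1:ℝ) + v2)) (v1 * v2 / (v1 + v2)) x from
            funext fun x => gaussianPDFReal_convolution_identity v1 v2 h1 h2 t x]
        exact (integrable_gaussianPDFReal _ _).const_mul _
      · exact ae_of_all _ fun x =>
          mul_nonneg (gaussianPDFReal_nonneg 0 v1 x) (gaussianPDFReal_nonneg 0 v2 (t - x))
    · simp [Set.indicator_of_notMem ht]
  simp_rw [inner]
  rw [gaussianReal_apply _ h12, ← lintegral_indicator hs (gaussianPDF 0 (v1+v2))]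
  congr 1
  funext t
  by_cases ht : t ∈ s <;> simp [Set.indicator_of_mem, Set.indicator_of_notMem, ht]


lemma pi_gaussian_map_sum : ∀ (d : ℕ) (c : Fin d → ℝ),
    (Measure.pi fun _ : Fin d => gaussianReal 0 1).map (fun z => ∑ i, c i * z i)
      = gaussianReal 0 (∑ i, (⟨(c i)^2, sq_nonneg _⟩ : ℝ≥0)) := by
  intro d
  induction d with
  | zero =>
    intro c
    simp only [Finset.univ_eq_empty, Finset.sum_empty]
    rw [show (fun z : Fin 0 → ℝ => (0:ℝ)) = fun _ => (0:ℝ) from rfl, Measure.map_const]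
    simp [gaussianReal_zero_var]
    show _ = gaussianReal 0 0
    exact (gaussianReal_zero_var 0).symm
  | succ n ih =>
    intro c
    set e := MeasurableEquiv.piFinSuccAbove (fun _ : Fin (n+1) => ℝ) 0 with he
    have hmp := measurePreserving_piFinSuccAbove (fun _ : Fin (n+1) => gaussianReal 0 1) 0
    have hcomp : (fun z : Fin (n+1) → ℝ => ∑ i, c i * z i)
        = (fun p : ℝ × (Fin n → ℝ) => c 0 * p.1 + ∑ j, c j.succ * p.2 j) ∘ e := by
      funext z
      simp only [Function.comp_apply, he, MeasurableEquiv.piFinSuccAbove_apply]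
      rw [Fin.sum_univ_succ]
      simp [Fin.removeNth, Fin.tail]
    have hmeas_g : Measurable (fun p : ℝ × (Fin n → ℝ) => c 0 * p.1 + ∑ j, c j.succ * p.2 j) := by
      apply Measurable.add
      · exact measurable_fst.const_mul _
      · exact Finset.measurable_sum _ fun j _ => (measurable_snd.eval).const_mul _
    rw [hcomp, ← Measure.map_map hmeas_g e.measurable, hmp.map_eq]
    have hsplit : (fun p : ℝ × (Fin n → ℝ) => c 0 * p.1 + ∑ j, c j.succ * p.2 j)
        = (fun q : ℝ × ℝ => q.1 + q.2) ∘
          (Prod.map (fun x : ℝ => c 0 * x) (fun z : Fin n → ℝ => ∑ j, c j.succ * z j)) := rfl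
    have hm1 : Measurable fun x : ℝ => c 0 * x := by fun_prop
    have hm2 : Measurable fun z : Fin n → ℝ => ∑ j, c j.succ * z j :=
      Finset.measurable_sum _ fun j _ => (measurable_pi_apply j).const_mul _
    rw [hsplit, ← Measure.map_map measurable_add (hm1.prodMap hm2),
      ← Measure.map_prod_map _ _ hm1 hm2]
    have h1 : (gaussianReal 0 1).map (fun x : ℝ => c 0 * x) = gaussianReal 0 ⟨(c 0)^2, sq_nonneg _⟩ := by
      rw [show (fun x : ℝ => c 0 * x) = (c 0 * ·) from rfl, gaussianReal_map_const_mul]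
      norm_num
      rfl
    have h2 := ih (fun j => c j.succ)
    rw [h1, h2]
    refine (gaussian_conv _ _).trans ?_
    congr 1
    exact (Fin.sum_univ_succ (fun i => (⟨c i ^ 2, sq_nonneg _⟩ : ℝ≥0))).symm


lemma gaussian_upper_tail (v : ℝ≥0) (hv : v ≠ 0) (t : ℝ) (ht : 0 ≤ t) :
    gaussianReal 0 v {x | t ≤ x} ≤ ENNReal.ofReal (Real.exp (-t^2 / (2*v))) := by
  have hv' : (0:ℝ) < v := lt_of_le_of_ne v.coe_nonneg (by exact_mod_cast (Ne.symm hv))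
  have hset : {x : ℝ | t ≤ x} = Set.Ici t := rfl
  rw [hset, gaussianReal_apply_eq_integral _ hv]
  apply ENNReal.ofReal_le_ofReal
  set l : ℝ := t / v with hl
  have hl0 : 0 ≤ l := div_nonneg ht hv'.le
  have key : ∀ x : ℝ, Real.exp (l * (x - t)) * gaussianPDFReal 0 v x
      = Real.exp (-t^2/(2*v)) * gaussianPDFReal (l * v) v x := by
    intro x
    have e1 := exp_mul_gaussianPDFReal v hv l x
    calc Real.exp (l * (x - t)) * gaussianPDFReal 0 v x
        = (Real.exp (l * x) * gaussianPDFReal 0 v x) / Real.exp (l * t) := by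
          rw [mul_sub, Real.exp_sub]; ring
      _ = (Real.exp (l^2 * v / 2) * gaussianPDFReal (l * v) v x) / Real.exp (l * t) := by rw [e1]
      _ = Real.exp (l^2 * v / 2 - l * t) * gaussianPDFReal (l * v) v x := by
          rw [Real.exp_sub]; ring
      _ = Real.exp (-t^2/(2*v)) * gaussianPDFReal (l * v) v x := by
          congr 1
          rw [hl]
          field_simp
          ring
  have step1 : ∫ x in Set.Ici t, gaussianPDFReal 0 v x
      ≤ ∫ x in Set.Ici t, Real.exp (-t^2/(2*v)) * gaussianPDFReal (l*v) v x := by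
    apply setIntegral_mono_on
    · exact (integrable_gaussianPDFReal 0 v).integrableOn
    · exact ((integrable_gaussianPDFReal _ v).const_mul _).integrableOn
    · exact measurableSet_Ici
    · intro x hx
      rw [← key x]
      nth_rewrite 1 [← one_mul (gaussianPDFReal 0 v x)]
      apply mul_le_mul_of_nonneg_right _ (gaussianPDFReal_nonneg _ _ _)
      rw [← Real.exp_zero]
      exact Real.exp_le_exp.mpr (mul_nonneg hl0 (by simpa using hx))
  refine step1.trans ?_
  have step2 : ∫ x in Set.Ici t, Real.exp (-t^2/(2*v)) * gaussianPDFReal (l*v) v x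
      ≤ ∫ x, Real.exp (-t^2/(2*v)) * gaussianPDFReal (l*v) v x := by
    apply setIntegral_le_integral ((integrable_gaussianPDFReal _ v).const_mul _)
    exact ae_of_all _ fun x => mul_nonneg (Real.exp_nonneg _) (gaussianPDFReal_nonneg _ _ _)
  refine step2.trans ?_
  rw [integral_const_mul, integral_gaussianPDFReal_eq_one _ hv, mul_one]


lemma gaussian_lower_tail (v : ℝ≥0) (hv : v ≠ 0) (t : ℝ) (ht : 0 ≤ t) :
    gaussianReal 0 v {x | x ≤ -t} ≤ ENNReal.ofReal (Real.exp (-t^2 / (2*v))) := by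
  have hv' : (0:ℝ) < v := lt_of_le_of_ne v.coe_nonneg (by exact_mod_cast (Ne.symm hv))
  have hmap : (gaussianReal 0 v).map (fun x : ℝ => (-1) * x) = gaussianReal 0 v := by
    rw [show (fun x : ℝ => (-1) * x) = ((-1 : ℝ) * ·) from rfl, gaussianReal_map_const_mul]
    norm_num
  have : gaussianReal 0 v {x | x ≤ -t} = gaussianReal 0 v {x | t ≤ x} := by
    conv_rhs => rw [← hmap]
    rw [Measure.map_apply (by fun_prop) (by
      exact measurableSet_le measurable_const measurable_id)]
    congr 1
    ext x
    simp only [Set.mem_preimage, Set.mem_setOf_eq]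
    constructor <;> intro h <;> linarith
  rw [this]
  exact gaussian_upper_tail v hv t ht


lemma gaussian_interval (v : ℝ≥0) (hv : v ≠ 0) (p q : ℝ) :
    gaussianReal 0 v {x | p ≤ x ∧ x ≤ q}
      ≤ ENNReal.ofReal ((q - p) / Real.sqrt (2 * π * v)) := by
  have hv' : (0:ℝ) < v := lt_of_le_of_ne v.coe_nonneg (by exact_mod_cast (Ne.symm hv))
  have hset : {x : ℝ | p ≤ x ∧ x ≤ q} = Set.Icc p q := rfl
  rcases lt_or_ge q p with hpq | hpq
  · rw [hset, Set.Icc_eq_empty (not_le.mpr hpq)]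
    simp
  rw [hset, gaussianReal_apply_eq_integral _ hv]
  apply ENNReal.ofReal_le_ofReal
  have hbound : ∀ x ∈ Set.Icc p q, gaussianPDFReal 0 v x ≤ (Real.sqrt (2 * π * v))⁻¹ := by
    intro x _
    unfold gaussianPDFReal
    nth_rewrite 2 [← mul_one (Real.sqrt (2 * π * v))⁻¹]
    apply mul_le_mul_of_nonneg_left _ (by positivity)
    rw [← Real.exp_zero]
    apply Real.exp_le_exp.mpr
    apply div_nonpos_of_nonpos_of_nonneg
    · simp [sq_nonneg]
    · positivity
  calc ∫ x in Set.Icc p q, gaussianPDFReal 0 v x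
      ≤ ∫ _x in Set.Icc p q, (Real.sqrt (2 * π * v))⁻¹ := by
        apply setIntegral_mono_on (integrable_gaussianPDFReal 0 v).integrableOn
          (integrableOn_const measure_Icc_lt_top.ne)
          measurableSet_Icc hbound
    _ ≤ (q - p) / Real.sqrt (2 * π * v) := by
        rw [setIntegral_const]
        rw [Real.volume_real_Icc_of_le hpq]
        rw [smul_eq_mul, div_eq_mul_inv]


/-- Anti-concentration bound for a standard Gaussian `z ∼ N(0, I_d)`: if
`‖x_k - x_j'‖₂ ≥ η > 0`, then the probability that `⟨x_k - x_j', z⟩ + y` lies between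
`0` and `⟨x_j - x_j', z⟩` (on either side) is at most
`2‖x_j - x_j'‖₂ √(2 log(2/δ)) / (√(2π) η) + δ`. -/
theorem gaussian_sandwich_prob_bound {d : ℕ} (xk xj xj' : Fin d → ℝ) (y η δ : ℝ)
    (hη : 0 < η) (hsep : η ≤ l2norm (fun i => xk i - xj' i))
    (hδ : 0 < δ) (hδ1 : δ < 1) :
    (Measure.pi (fun _ : Fin d => gaussianReal 0 1))
        {z | (∑ i, (xk i - xj' i) * z i) + y ≤ ∑ i, (xj i - xj' i) * z i ∧
             0 ≤ (∑ i, (xk i - xj' i) * z i) + y} +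
      (Measure.pi (fun _ : Fin d => gaussianReal 0 1))
        {z | ∑ i, (xj i - xj' i) * z i ≤ (∑ i, (xk i - xj' i) * z i) + y ∧
             (∑ i, (xk i - xj' i) * z i) + y ≤ 0} ≤
      ENNReal.ofReal
        (2 * l2norm (fun i => xj i - xj' i) * Real.sqrt (2 * Real.log (2 / δ)) /
            (Real.sqrt (2 * π) * η) + δ) := by
  set μ := Measure.pi (fun _ : Fin d => gaussianReal 0 1) with hμ
  set a : Fin d → ℝ := fun i => xk i - xj' i with ha
  set b : Fin d → ℝ := fun i => xj i - xj' i with hb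
  set A : (Fin d → ℝ) → ℝ := fun z => ∑ i, a i * z i with hA
  set B : (Fin d → ℝ) → ℝ := fun z => ∑ i, b i * z i with hB
  have hAmeas : Measurable A := Finset.measurable_sum _ fun i _ => (measurable_pi_apply i).const_mul _
  have hBmeas : Measurable B := Finset.measurable_sum _ fun i _ => (measurable_pi_apply i).const_mul _
  set va : ℝ≥0 := ∑ i, (⟨(a i)^2, sq_nonneg _⟩ : ℝ≥0) with hva
  set vb : ℝ≥0 := ∑ i, (⟨(b i)^2, sq_nonneg _⟩ : ℝ≥0) with hvb
  have hvaR : (va:ℝ) = ∑ i, (a i)^2 := by push_cast [hva]; exact NNReal.coe_sum (s := Finset.univ) (f := fun i => (⟨(a i)^2, sq_nonneg _⟩ : ℝ≥0))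
  have hvbR : (vb:ℝ) = ∑ i, (b i)^2 := by push_cast [hvb]; exact NNReal.coe_sum (s := Finset.univ) (f := fun i => (⟨(b i)^2, sq_nonneg _⟩ : ℝ≥0))
  have hl2a : l2norm a = Real.sqrt va := by rw [hvaR]; rfl
  have hl2b : l2norm b = Real.sqrt vb := by rw [hvbR]; rfl
  have hva_pos : (0:ℝ) < va := by
    have h2 : η^2 ≤ (va:ℝ) := by
      rw [hvaR]
      have := hsep
      rw [show l2norm (fun i => xk i - xj' i) = l2norm a from rfl] at this
      calc η^2 ≤ (l2norm a)^2 := by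
            apply pow_le_pow_left₀ hη.le this
        _ = ∑ i, (a i)^2 := Real.sq_sqrt (Finset.sum_nonneg fun i _ => sq_nonneg _)
    nlinarith [sq_nonneg η]
  have hva0 : va ≠ 0 := by
    intro h
    rw [h] at hva_pos
    simp at hva_pos
  have hlog : 0 ≤ Real.log (2/δ) := Real.log_nonneg (by rw [le_div_iff₀ hδ]; linarith)
  set t : ℝ := l2norm b * Real.sqrt (2 * Real.log (2/δ)) with hT
  have ht0 : 0 ≤ t := mul_nonneg (Real.sqrt_nonneg _) (Real.sqrt_nonneg _)
  -- the interval bound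
  have interval_bound : ∀ p q : ℝ, q - p = t →
      μ {z | p ≤ A z ∧ A z ≤ q} ≤ ENNReal.ofReal (t / (Real.sqrt (2*π) * η)) := by
    intro p q hpq
    have hset : {z | p ≤ A z ∧ A z ≤ q} = A ⁻¹' {x | p ≤ x ∧ x ≤ q} := rfl
    rw [hset, ← Measure.map_apply hAmeas (by exact measurableSet_Icc : MeasurableSet {x | p ≤ x ∧ x ≤ q})]
    rw [hμ, hA, pi_gaussian_map_sum d a, ← hva]
    refine (gaussian_interval va hva0 p q).trans ?_
    apply ENNReal.ofReal_le_ofReal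
    rw [hpq]
    apply div_le_div_of_nonneg_left ht0 (by positivity)
    have hsqrt : Real.sqrt (2*π*(va:ℝ)) = Real.sqrt (2*π) * Real.sqrt (va:ℝ) :=
      Real.sqrt_mul (by positivity) _
    rw [hsqrt]
    apply mul_le_mul_of_nonneg_left _ (Real.sqrt_nonneg _)
    rw [← hl2a]
    exact hsep
  -- the tail bounds
  have exp_eq : vb ≠ 0 → Real.exp (-t^2 / (2*vb)) = δ/2 := by
    intro hvb0
    have hvb_pos : (0:ℝ) < vb := lt_of_le_of_ne vb.coe_nonneg (by exact_mod_cast (Ne.symm hvb0))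
    have ht2 : t^2 = (vb:ℝ) * (2 * Real.log (2/δ)) := by
      rw [hT, mul_pow, hl2b, Real.sq_sqrt vb.coe_nonneg, Real.sq_sqrt (by linarith)]
    have hdiv : -((vb:ℝ) * (2 * Real.log (2/δ))) / (2*(vb:ℝ)) = -Real.log (2/δ) := by
      field_simp
    rw [ht2, hdiv]
    rw [Real.exp_neg, Real.exp_log (by positivity), inv_div]
  have upper_tail : μ {z | t < B z} ≤ ENNReal.ofReal (δ/2) := by
    by_cases hvb0 : vb = 0
    · have hbz : ∀ i, b i = 0 := by
        intro i
        have h0 : ∑ i, (b i)^2 = 0 := by rw [← hvbR, hvb0]; simp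
        have := (Finset.sum_eq_zero_iff_of_nonneg (fun i _ => sq_nonneg (b i))).mp h0 i (Finset.mem_univ i)
        exact pow_eq_zero_iff (by norm_num) |>.mp this
      have : {z : Fin d → ℝ | t < B z} = ∅ := by
        ext z
        simp only [Set.mem_setOf_eq, Set.mem_empty_iff_false, iff_false, not_lt, hB]
        calc ∑ i, b i * z i = 0 := by simp [hbz]
          _ ≤ t := ht0
      rw [this]
      simp
    · have hset : {z | t < B z} = B ⁻¹' {x | t < x} := rfl
      rw [hset, ← Measure.map_apply hBmeas (by exact measurableSet_Ioi : MeasurableSet {x | t < x})]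
      rw [hμ, hB, pi_gaussian_map_sum d b, ← hvb]
      refine (measure_mono (by intro x hx; exact le_of_lt (α := ℝ) (a := t) (b := x) hx : {x : ℝ | t < x} ⊆ {x | t ≤ x})).trans ?_
      refine (gaussian_upper_tail vb hvb0 t ht0).trans ?_
      rw [exp_eq hvb0]
  have lower_tail : μ {z | B z < -t} ≤ ENNReal.ofReal (δ/2) := by
    by_cases hvb0 : vb = 0
    · have hbz : ∀ i, b i = 0 := by
        intro i
        have h0 : ∑ i, (b i)^2 = 0 := by rw [← hvbR, hvb0]; simp
        have := (Finset.sum_eq_zero_iff_of_nonneg (fun i _ => sq_nonneg (b i))).mp h0 i (Finset.mem_univ i)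
        exact pow_eq_zero_iff (by norm_num) |>.mp this
      have : {z : Fin d → ℝ | B z < -t} = ∅ := by
        ext z
        simp only [Set.mem_setOf_eq, Set.mem_empty_iff_false, iff_false, not_lt, hB]
        calc -t ≤ 0 := by linarith
          _ = ∑ i, b i * z i := by simp [hbz]
      rw [this]
      simp
    · have hset : {z | B z < -t} = B ⁻¹' {x | x < -t} := rfl
      rw [hset, ← Measure.map_apply hBmeas (by exact measurableSet_Iio : MeasurableSet {x | x < -t})]
      rw [hμ, hB, pi_gaussian_map_sum d b, ← hvb]
      have hsub : {x : ℝ | x < -t} ⊆ {x | x ≤ -t} := by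
        intro x hx
        simp only [Set.mem_setOf_eq] at hx ⊢
        exact le_of_lt hx
      refine (measure_mono hsub).trans ?_
      refine (gaussian_lower_tail vb hvb0 t ht0).trans ?_
      rw [exp_eq hvb0]
  -- event inclusions
  have hE1 : {z : Fin d → ℝ | A z + y ≤ B z ∧ 0 ≤ A z + y}
      ⊆ {z | -y ≤ A z ∧ A z ≤ t - y} ∪ {z | t < B z} := by
    intro z ⟨h1, h2⟩
    by_cases hc : B z ≤ t
    · left; exact ⟨by linarith, by linarith⟩
    · right; exact not_le.mp hc
  have hE2 : {z : Fin d → ℝ | B z ≤ A z + y ∧ A z + y ≤ 0}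
      ⊆ {z | -t - y ≤ A z ∧ A z ≤ -y} ∪ {z | B z < -t} := by
    intro z ⟨h1, h2⟩
    by_cases hc : -t ≤ B z
    · left; exact ⟨by linarith, by linarith⟩
    · right; exact not_le.mp hc
  have bound1 : μ {z | A z + y ≤ B z ∧ 0 ≤ A z + y}
      ≤ ENNReal.ofReal (t / (Real.sqrt (2*π) * η)) + ENNReal.ofReal (δ/2) :=
    (measure_mono hE1).trans ((measure_union_le _ _).trans
      (add_le_add (interval_bound (-y) (t-y) (by ring)) upper_tail))
  have bound2 : μ {z | B z ≤ A z + y ∧ A z + y ≤ 0}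
      ≤ ENNReal.ofReal (t / (Real.sqrt (2*π) * η)) + ENNReal.ofReal (δ/2) :=
    (measure_mono hE2).trans ((measure_union_le _ _).trans
      (add_le_add (interval_bound (-t-y) (-y) (by ring)) lower_tail))
  have hq1 : 0 ≤ t / (Real.sqrt (2*π) * η) := div_nonneg ht0 (by positivity)
  calc μ {z | A z + y ≤ B z ∧ 0 ≤ A z + y} + μ {z | B z ≤ A z + y ∧ A z + y ≤ 0}
      ≤ (ENNReal.ofReal (t / (Real.sqrt (2*π) * η)) + ENNReal.ofReal (δ/2))
        + (ENNReal.ofReal (t / (Real.sqrt (2*π) * η)) + ENNReal.ofReal (δ/2)) :=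
        add_le_add bound1 bound2
    _ = ENNReal.ofReal ((t / (Real.sqrt (2*π) * η) + δ/2) + (t / (Real.sqrt (2*π) * η) + δ/2)) := by
        rw [← ENNReal.ofReal_add hq1 (by linarith), ← ENNReal.ofReal_add (by linarith) (by linarith)]
    _ ≤ _ := by
        apply ENNReal.ofReal_le_ofReal
        apply le_of_eq
        rw [hT]
        ring
end
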